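/- Let C be the universal unital C*-algebra generated by two projections p, q. Then there is a unique unital *-homomorphism Γ : C → C ⊗ C with Γ(p) = p ⊗ p + (1 − p) ⊗ q and Γ(q) = q ⊗ p + (1 − q) ⊗ q, and Γ is coassociative: (Γ ⊗ id) ∘ Γ = (id ⊗ Γ) ∘ Γ. -/
import Mathlib


/-- Let `C` be the universal unital C*-algebra generated by two projections
`P, Q` (modeled via its universal property).  There is a unique unital *-homomorphism
`Γ : C → C ⊗ C` with `Γ(P) = P ⊗ P + (1 − P) ⊗ Q` and `Γ(Q) = Q ⊗ P + (1 − Q) ⊗ Q`, and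
`Γ` is coassociative.  C*-tensor products are modeled by a C*-algebra with unital
*-homomorphisms of the factors having commuting ranges (`x ⊗ y ↦ j₁ x * j₂ y`);
coassociativity `(Γ ⊗ id) ∘ Γ = (id ⊗ Γ) ∘ Γ` is expressed on the generators in any model
of the triple tensor product. -/

private lemma proj_mix {R : Type*} [Ring R] [StarRing R] (A B D : R)
    (hA : IsSelfAdjoint A) (hA2 : A * A = A)
    (hB : IsSelfAdjoint B) (hB2 : B * B = B)
    (hD : IsSelfAdjoint D) (hD2 : D * D = D)
    (hAB : A * B = B * A) (hAD : A * D = D * A) :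
    IsSelfAdjoint (A * B + (1 - A) * D) ∧
      (A * B + (1 - A) * D) * (A * B + (1 - A) * D) = A * B + (1 - A) * D := by
  constructor
  · have : star (A * B + (1 - A) * D) = B * A + D * (1 - A) := by
      simp [star_add, star_mul, hA.star_eq, hB.star_eq, hD.star_eq]
    rw [IsSelfAdjoint, this, ← hAB, mul_sub, sub_mul, mul_one, one_mul, hAD]
  · have e1 : (A * B) * (A * B) = A * B := by
      rw [mul_assoc, ← mul_assoc B, ← hAB, mul_assoc, hB2, ← mul_assoc, hA2]
    have e2 : (A * B) * ((1 - A) * D) = 0 := by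
      have hB' : B * (1 - A) = (1 - A) * B := by
        rw [mul_sub, sub_mul, mul_one, one_mul, hAB]
      rw [mul_assoc, ← mul_assoc B, hB', mul_assoc, ← mul_assoc,
        mul_sub, mul_one, hA2, sub_self, zero_mul]
    have e3 : ((1 - A) * D) * (A * B) = 0 := by
      have hD' : D * A = A * D := hAD.symm
      rw [mul_assoc, ← mul_assoc D, hD', mul_assoc, ← mul_assoc,
        sub_mul, one_mul, hA2, sub_self, zero_mul]
    have e4 : ((1 - A) * D) * ((1 - A) * D) = (1 - A) * D := by
      have hD' : D * (1 - A) = (1 - A) * D := by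
        rw [mul_sub, sub_mul, mul_one, one_mul, hAD]
      have hA' : (1 - A) * (1 - A) = 1 - A := by
        rw [one_sub_mul, mul_one_sub, hA2]; abel
      rw [mul_assoc, ← mul_assoc D, hD', mul_assoc, ← mul_assoc, hA', hD2]
    rw [add_mul, mul_add, mul_add, e1, e2, e3, e4, add_zero, zero_add]

theorem stmt_15
    (C T₂ T₃ : Type) [NormedRing C] [StarRing C] [CStarRing C] [NormedAlgebra ℂ C]
    [StarModule ℂ C] [CompleteSpace C]
    [NormedRing T₂] [StarRing T₂] [CStarRing T₂] [NormedAlgebra ℂ T₂]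
    [StarModule ℂ T₂] [CompleteSpace T₂]
    [NormedRing T₃] [StarRing T₃] [CStarRing T₃] [NormedAlgebra ℂ T₃]
    [StarModule ℂ T₃] [CompleteSpace T₃]
    (P Q : C) (hP : IsSelfAdjoint P ∧ P * P = P) (hQ : IsSelfAdjoint Q ∧ Q * Q = Q)
    (hUP : ∀ (D : Type) [NormedRing D] [StarRing D] [CStarRing D] [NormedAlgebra ℂ D]
      [StarModule ℂ D] [CompleteSpace D] (a b : D),
      (IsSelfAdjoint a ∧ a * a = a) → (IsSelfAdjoint b ∧ b * b = b) →
      ∃! φ : C →⋆ₐ[ℂ] D, φ P = a ∧ φ Q = b)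
    (j₁ j₂ : C →⋆ₐ[ℂ] T₂) (hjcomm : ∀ x y : C, j₁ x * j₂ y = j₂ y * j₁ x)
    (k₁ k₂ k₃ : C →⋆ₐ[ℂ] T₃)
    (hkcomm₁₂ : ∀ x y : C, k₁ x * k₂ y = k₂ y * k₁ x)
    (hkcomm₁₃ : ∀ x y : C, k₁ x * k₃ y = k₃ y * k₁ x)
    (hkcomm₂₃ : ∀ x y : C, k₂ x * k₃ y = k₃ y * k₂ x) :
    -- existence and uniqueness of `Γ`
    (∃! Γ : C →⋆ₐ[ℂ] T₂,
      Γ P = j₁ P * j₂ P + j₁ (1 - P) * j₂ Q ∧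
      Γ Q = j₁ Q * j₂ P + j₁ (1 - Q) * j₂ Q) ∧
    -- coassociativity `(Γ ⊗ id) ∘ Γ = (id ⊗ Γ) ∘ Γ` on the generators `P` and `Q`
    ((k₁ P * k₂ P + k₁ (1 - P) * k₂ Q) * k₃ P +
        (1 - (k₁ P * k₂ P + k₁ (1 - P) * k₂ Q)) * k₃ Q
      = k₁ P * (k₂ P * k₃ P + k₂ (1 - P) * k₃ Q) +
        k₁ (1 - P) * (k₂ Q * k₃ P + k₂ (1 - Q) * k₃ Q)) ∧
    ((k₁ Q * k₂ P + k₁ (1 - Q) * k₂ Q) * k₃ P +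
        (1 - (k₁ Q * k₂ P + k₁ (1 - Q) * k₂ Q)) * k₃ Q
      = k₁ Q * (k₂ P * k₃ P + k₂ (1 - P) * k₃ Q) +
        k₁ (1 - Q) * (k₂ Q * k₃ P + k₂ (1 - Q) * k₃ Q)) := by

  obtain ⟨hPsa, hP2⟩ := hP
  obtain ⟨hQsa, hQ2⟩ := hQ
  have selfadj : ∀ {D : Type} [NormedRing D] [StarRing D] [CStarRing D]
      [NormedAlgebra ℂ D] [StarModule ℂ D] [CompleteSpace D]
      (f : C →⋆ₐ[ℂ] D) (x : C), IsSelfAdjoint x → IsSelfAdjoint (f x) := by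
    intro D _ _ _ _ _ _ f x hx
    rw [IsSelfAdjoint, ← map_star, hx.star_eq]
  refine ⟨?_, ?_, ?_⟩
  · have hj1 : j₁ (1 - P) = 1 - j₁ P := by simp
    have hj1' : j₁ (1 - Q) = 1 - j₁ Q := by simp
    have ha := proj_mix (j₁ P) (j₂ P) (j₂ Q) (selfadj j₁ P hPsa)
      (by rw [← map_mul, hP2]) (selfadj j₂ P hPsa) (by rw [← map_mul, hP2])
      (selfadj j₂ Q hQsa) (by rw [← map_mul, hQ2]) (hjcomm P P) (hjcomm P Q)
    have hb := proj_mix (j₁ Q) (j₂ P) (j₂ Q) (selfadj j₁ Q hQsa)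
      (by rw [← map_mul, hQ2]) (selfadj j₂ P hPsa) (by rw [← map_mul, hP2])
      (selfadj j₂ Q hQsa) (by rw [← map_mul, hQ2]) (hjcomm Q P) (hjcomm Q Q)
    rw [hj1, hj1']
    exact hUP T₂ _ _ ha hb
  · simp only [map_sub, map_one]
    noncomm_ring
  · simp only [map_sub, map_one]
    noncomm_ring
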